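/- Let F : ℝⁿ → ℝⁿ be 1-Lipschitz and define F'(x) := F(x(1 - τ/(1+|x|))) for τ ∈ (0,1). Then for all x, y ∈ ℝⁿ: |F'(x) - F'(y)| ≤ |x-y|(1 - τ/((1+|x|)(1+|y|))); in particular F' is locally strictly short and sup_x |F(x) - F'(x)| ≤ τ. -/

import Mathlib

lemma key16 (X Y p τ : ℝ) (hX : 0 ≤ X) (hY : 0 ≤ Y) (hp : p ≤ X*Y)
    (ht0 : 0 < τ) (ht1 : τ ≤ 1) :
    (1-τ/(1+X))^2*X^2 - 2*((1-τ/(1+X))*(1-τ/(1+Y)))*p + (1-τ/(1+Y))^2*Y^2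
      ≤ (1-τ/((1+X)*(1+Y)))^2*(X^2-2*p+Y^2) := by
  have ha : (0:ℝ) < 1+X := by linarith
  have hb : (0:ℝ) < 1+Y := by linarith
  have hid : (1-τ/((1+X)*(1+Y)))^2*(X^2-2*p+Y^2) -
      ((1-τ/(1+X))^2*X^2 - 2*((1-τ/(1+X))*(1-τ/(1+Y)))*p + (1-τ/(1+Y))^2*Y^2)
      = (2*τ*(X*Y-p)*(((1+X)*(1+Y)-τ)*(X+Y) - τ*(X*Y))) / ((1+X)^2*(1+Y)^2) := by
    field_simp
    ring
  have hbr : 0 ≤ ((1+X)*(1+Y)-τ)*(X+Y) - τ*(X*Y) := by nlinarith [sq_nonneg (X+Y), mul_nonneg hX hY]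
  have hnum : 0 ≤ 2*τ*(X*Y-p)*(((1+X)*(1+Y)-τ)*(X+Y) - τ*(X*Y)) := by
    apply mul_nonneg _ hbr
    apply mul_nonneg (by linarith) (by linarith)
  have hden : (0:ℝ) < (1+X)^2*(1+Y)^2 := by positivity
  nlinarith [div_nonneg hnum hden.le, hid]

theorem stmt16 (n : ℕ)
    (F : EuclideanSpace ℝ (Fin (n+1)) → EuclideanSpace ℝ (Fin (n+1)))
    (hF : LipschitzWith 1 F) (τ : ℝ) (hτ0 : 0 < τ) (hτ1 : τ < 1)
    (F' : EuclideanSpace ℝ (Fin (n+1)) → EuclideanSpace ℝ (Fin (n+1)))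
    (hdef : ∀ x, F' x = F ((1 - τ / (1 + ‖x‖)) • x)) :
    (∀ x y, ‖F' x - F' y‖ ≤ ‖x - y‖ * (1 - τ / ((1 + ‖x‖) * (1 + ‖y‖)))) ∧
    (∀ x, ‖F x - F' x‖ ≤ τ) ∧
    (∀ A : Set (EuclideanSpace ℝ (Fin (n+1))), Bornology.IsBounded A →
      ∃ L : ℝ, L < 1 ∧ ∀ x ∈ A, ∀ y ∈ A, ‖F' x - F' y‖ ≤ L * ‖x - y‖) := by
  have hFlip : ∀ u v, ‖F u - F v‖ ≤ ‖u - v‖ := by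
    intro u v
    have := hF.dist_le_mul u v
    simpa [dist_eq_norm] using this
  have main : ∀ x y, ‖F' x - F' y‖ ≤ ‖x - y‖ * (1 - τ / ((1 + ‖x‖) * (1 + ‖y‖))) := by
    intro x y
    set X := ‖x‖ with hXdef
    set Y := ‖y‖ with hYdef
    have hX : 0 ≤ X := norm_nonneg x
    have hY : 0 ≤ Y := norm_nonneg y
    have ha : (0:ℝ) < 1+X := by linarith
    have hb : (0:ℝ) < 1+Y := by linarith
    set α := 1 - τ/(1+X) with hαdef
    set β := 1 - τ/(1+Y) with hβdef
    have hτa : τ/(1+X) ≤ τ := by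
      rw [div_le_iff₀ ha]; nlinarith
    have hτb : τ/(1+Y) ≤ τ := by
      rw [div_le_iff₀ hb]; nlinarith
    have hα : 0 < α := by simp only [hαdef]; linarith
    have hβ : 0 < β := by simp only [hβdef]; linarith
    set c := τ/((1+X)*(1+Y)) with hcdef
    have hc1 : c < 1 := by
      rw [hcdef, div_lt_one (by positivity)]; nlinarith
    have hc0 : 0 < c := by positivity
    set p := (inner ℝ x y : ℝ) with hpdef
    have hp : p ≤ X*Y := real_inner_le_norm x y
    rw [hdef x, hdef y]
    refine le_trans (hFlip _ _) ?_
    -- norm squared computation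
    have h1 : ‖α • x - β • y‖^2 = α^2*X^2 - 2*(α*β)*p + β^2*Y^2 := by
      rw [norm_sub_sq_real]
      rw [norm_smul, norm_smul, real_inner_smul_left, real_inner_smul_right]
      simp only [abs_of_pos hα, abs_of_pos hβ, ← hpdef, Real.norm_eq_abs]
      rw [← hXdef, ← hYdef]
      ring
    have h2 : ‖x - y‖^2 = X^2 - 2*p + Y^2 := by
      rw [norm_sub_sq_real]
    have hkey := key16 X Y p τ hX hY hp hτ0 hτ1.le
    have hsq : ‖α • x - β • y‖^2 ≤ (‖x - y‖ * (1-c))^2 := by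
      rw [h1, mul_pow, h2, hcdef, hαdef, hβdef]
      calc (1-τ/(1+X))^2*X^2 - 2*((1-τ/(1+X))*(1-τ/(1+Y)))*p + (1-τ/(1+Y))^2*Y^2
          ≤ (1-τ/((1+X)*(1+Y)))^2*(X^2-2*p+Y^2) := hkey
        _ = (X^2-2*p+Y^2) * (1-τ/((1+X)*(1+Y)))^2 := by ring
    have hrhs : 0 ≤ ‖x - y‖ * (1-c) := by
      apply mul_nonneg (norm_nonneg _); linarith
    calc ‖α • x - β • y‖ ≤ ‖x - y‖ * (1-c) := by
          nlinarith [norm_nonneg (α • x - β • y)]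
      _ = ‖x - y‖ * (1 - τ / ((1 + X) * (1 + Y))) := by rw [hcdef]
  refine ⟨main, ?_, ?_⟩
  · intro x
    rw [hdef x]
    refine le_trans (hFlip _ _) ?_
    have ha : (0:ℝ) < 1 + ‖x‖ := by positivity
    have h1 : x - (1 - τ / (1 + ‖x‖)) • x = (τ / (1 + ‖x‖)) • x := by
      rw [sub_smul, one_smul]; abel
    rw [h1, norm_smul]
    rw [Real.norm_eq_abs, abs_of_pos (by positivity)]
    rw [div_mul_eq_mul_div, div_le_iff₀ ha]
    nlinarith [norm_nonneg x]
  · intro A hA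
    obtain ⟨R, hR⟩ := hA.exists_norm_le
    set R' := max R 0 with hR'def
    have hR'0 : 0 ≤ R' := le_max_right R 0
    have hden : (0:ℝ) < (1+R')^2 := by positivity
    refine ⟨1 - τ/(1+R')^2, by nlinarith [div_pos hτ0 hden], ?_⟩
    intro x hx y hy
    have hxR : ‖x‖ ≤ R' := le_trans (hR x hx) (le_max_left R 0)
    have hyR : ‖y‖ ≤ R' := le_trans (hR y hy) (le_max_left R 0)
    have hX : 0 ≤ ‖x‖ := norm_nonneg x
    have hY : 0 ≤ ‖y‖ := norm_nonneg y
    have hprod : (1+‖x‖)*(1+‖y‖) ≤ (1+R')^2 := by nlinarith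
    have hprod0 : (0:ℝ) < (1+‖x‖)*(1+‖y‖) := by positivity
    have hdivs : τ/(1+R')^2 ≤ τ/((1+‖x‖)*(1+‖y‖)) :=
      div_le_div_of_nonneg_left hτ0.le hprod0 hprod
    calc ‖F' x - F' y‖ ≤ ‖x - y‖ * (1 - τ / ((1 + ‖x‖) * (1 + ‖y‖))) := main x y
      _ ≤ ‖x - y‖ * (1 - τ/(1+R')^2) := by
          apply mul_le_mul_of_nonneg_left (by linarith) (norm_nonneg _)
      _ = (1 - τ/(1+R')^2) * ‖x - y‖ := by ring
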